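/- arXiv:1708.07595 — 3 statements merged into one kernel-verified Lean document; each statement's English description precedes it below -/
import Mathlib

section
/- Assume in addition that d₁ > d₂ > … > d_p (strict inequalities). Let n > 0, set A = −(n/2)·log det Σ − (n/2)·tr(Σ⁻¹S) and B = −(n/2)·(Σ_{i=1}^k log λ_i + (p−k) log λ) − (n/2)·Σ_{i=1}^k d_i/λ_i − (n/2)·Σ_{i=k+1}^p d_i/λ. Then there exists a real number ρ ≥ 0 such that A = B − (1/2)·ρ·n·Σ_{i=1}^k Σ_{j=i+1}^p (d_i − d_j) P_{ij}² / λ_i. -/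
open Matrix Finset

private lemma abel_aux (a g : ℕ → ℝ) : ∀ N : ℕ, (∀ i j, i ≤ j → j ≤ N → a j ≤ a i) →
    (∀ m, m ≤ N → 0 ≤ ∑ i ∈ Finset.range m, g i) →
    a N * ∑ i ∈ Finset.range N, g i ≤ ∑ i ∈ Finset.range N, a i * g i := by
  intro N
  induction N with
  | zero => simp
  | succ n ih =>
    intro hanti hG
    have h1 := ih (fun i j hij hjn => hanti i j hij (hjn.trans n.le_succ))
      (fun m hm => hG m (hm.trans n.le_succ))
    rw [Finset.sum_range_succ, Finset.sum_range_succ]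
    have h2 := hG (n+1) le_rfl
    rw [Finset.sum_range_succ] at h2
    have h3 : a (n+1) ≤ a n := hanti n (n+1) n.le_succ le_rfl
    nlinarith [h1, h2, h3]

private lemma filt_to_range (p m : ℕ) (hm : m ≤ p) (f : Fin p → ℝ) :
    ∑ i ∈ Finset.univ.filter (fun i : Fin p => (i : ℕ) < m), f i
      = ∑ i ∈ Finset.range m, (fun n => if h : n < p then f ⟨n, h⟩ else 0) i := by
  set g : ℕ → ℝ := fun n => if h : n < p then f ⟨n, h⟩ else 0 with hg
  calc ∑ i ∈ Finset.univ.filter (fun i : Fin p => (i : ℕ) < m), f i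
      = ∑ a : Fin p, (if (a:ℕ) < m then f a else 0) := Finset.sum_filter _ _
    _ = ∑ a : Fin p, (fun n => if n < m then g n else 0) (a : ℕ) := by
        apply Finset.sum_congr rfl; intro a _; simp [hg, a.isLt]
    _ = ∑ n ∈ Finset.range p, (if n < m then g n else 0) :=
        Fin.sum_univ_eq_sum_range (fun n => if n < m then g n else 0) p
    _ = ∑ n ∈ (Finset.range p).filter (fun n => n < m), g n := (Finset.sum_filter _ _).symm
    _ = ∑ n ∈ Finset.range m, g n := by
        congr 1; ext n; simp [Finset.mem_range]; omega

private lemma card_filt (p m : ℕ) (hm : m ≤ p) :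
    (Finset.univ.filter (fun i : Fin p => (i : ℕ) < m)).card = m := by
  have : Finset.univ.filter (fun i : Fin p => (i : ℕ) < m)
      = Finset.map (Fin.castLEEmb hm) Finset.univ := by
    ext i
    simp only [Finset.mem_filter, Finset.mem_map, Finset.mem_univ, true_and]
    constructor
    · intro h; exact ⟨⟨i, h⟩, rfl⟩
    · rintro ⟨j, rfl⟩; exact j.isLt
  rw [this, Finset.card_map, Finset.card_univ, Fintype.card_fin]

/-- With `Σ = Γ diag(λ) Γᵀ` (Γ orthogonal, eigenvalues
`λ₁ ≥ … ≥ λ_k > λ_{k+1} = … = λ_p = λ > 0`), `S = C diag(d) Cᵀ`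
(C orthogonal, `d₁ > … > d_p`), `P = Γᵀ C`, `n > 0`,
`A = −(n/2)·log det Σ − (n/2)·tr(Σ⁻¹S)` and
`B = −(n/2)·(Σ_{i≤k} log λ_i + (p−k) log λ) − (n/2)·Σ_{i≤k} d_i/λ_i − (n/2)·Σ_{i>k} d_i/λ`,
there is `ρ ≥ 0` with `A = B − (ρn/2)·Σ_{i=1}^k Σ_{j>i} (d_i − d_j) P_{ij}²/λ_i`. -/
theorem loglik_decomposition (p k : ℕ) (hk : 1 ≤ k) (hkp : k < p)
    (Γ C : Matrix (Fin p) (Fin p) ℝ)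
    (lamv d : Fin p → ℝ) (lam : ℝ)
    (hΓ : Γ * Γᵀ = 1) (hΓ' : Γᵀ * Γ = 1)
    (hC : C * Cᵀ = 1) (hC' : Cᵀ * C = 1)
    (hlam_anti : ∀ i j : Fin p, i ≤ j → lamv j ≤ lamv i)
    (hlam_tail : ∀ i : Fin p, k ≤ (i : ℕ) → lamv i = lam)
    (hlam_gt : ∀ i : Fin p, (i : ℕ) < k → lam < lamv i)
    (hlam_pos : 0 < lam)
    (hd_strict : ∀ i j : Fin p, i < j → d j < d i)
    (Sig S : Matrix (Fin p) (Fin p) ℝ)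
    (hSig : Sig = Γ * Matrix.diagonal lamv * Γᵀ)
    (hS : S = C * Matrix.diagonal d * Cᵀ)
    (P : Matrix (Fin p) (Fin p) ℝ) (hP : P = Γᵀ * C)
    (n : ℝ) (hn : 0 < n)
    (A B : ℝ)
    (hA : A = -(n / 2) * Real.log Sig.det - (n / 2) * Matrix.trace (Sig⁻¹ * S))
    (hB : B = -(n / 2) * ((∑ i ∈ Finset.univ.filter (fun i : Fin p => (i : ℕ) < k),
              Real.log (lamv i)) + ((p : ℝ) - k) * Real.log lam)
          - (n / 2) * ∑ i ∈ Finset.univ.filter (fun i : Fin p => (i : ℕ) < k), d i / lamv i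
          - (n / 2) * ∑ i ∈ Finset.univ.filter (fun i : Fin p => k ≤ (i : ℕ)), d i / lam) :
    ∃ ρ : ℝ, 0 ≤ ρ ∧
      A = B - (1 / 2) * ρ * n *
        ∑ i ∈ Finset.univ.filter (fun i : Fin p => (i : ℕ) < k),
          ∑ j ∈ Finset.univ.filter (fun j : Fin p => i < j),
            (d i - d j) * (P i j) ^ 2 / lamv i := by
  -- basic positivity facts
  have hlamv_ge : ∀ i : Fin p, lam ≤ lamv i := by
    intro i
    rcases lt_or_ge (i : ℕ) k with h | h
    · exact (hlam_gt i h).le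
    · exact (hlam_tail i h).ge
  have hlamv_pos : ∀ i : Fin p, 0 < lamv i := fun i => lt_of_lt_of_le hlam_pos (hlamv_ge i)
  have hd_anti : ∀ i j : Fin p, i ≤ j → d j ≤ d i := by
    intro i j h
    rcases h.lt_or_eq with h | h
    · exact (hd_strict i j h).le
    · rw [h]
  -- P is orthogonal
  have hPPt : P * Pᵀ = 1 := by
    rw [hP, Matrix.transpose_mul, Matrix.transpose_transpose]
    calc Γᵀ * C * (Cᵀ * Γ) = Γᵀ * (C * Cᵀ * Γ) := by simp only [Matrix.mul_assoc]
    _ = 1 := by rw [hC, Matrix.one_mul, hΓ']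
  have hPtP : Pᵀ * P = 1 := by
    rw [hP, Matrix.transpose_mul, Matrix.transpose_transpose]
    calc Cᵀ * Γ * (Γᵀ * C) = Cᵀ * (Γ * Γᵀ * C) := by simp only [Matrix.mul_assoc]
    _ = 1 := by rw [hΓ, Matrix.one_mul, hC']
  have hrow : ∀ i : Fin p, ∑ j, P i j ^ 2 = 1 := by
    intro i
    have := congrFun (congrFun hPPt i) i
    simpa [Matrix.mul_apply, Matrix.one_apply, sq] using this
  have hcol : ∀ j : Fin p, ∑ i, P i j ^ 2 = 1 := by
    intro j
    have := congrFun (congrFun hPtP j) j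
    simpa [Matrix.mul_apply, Matrix.one_apply, sq] using this
  -- determinant
  have hdetΓ : Γ.det * Γ.det = 1 := by
    have := congrArg Matrix.det hΓ
    rwa [Matrix.det_mul, Matrix.det_transpose, Matrix.det_one] at this
  have hdet : Sig.det = ∏ i, lamv i := by
    rw [hSig, Matrix.det_mul, Matrix.det_mul, Matrix.det_diagonal, Matrix.det_transpose]
    linear_combination (∏ i, lamv i) * hdetΓ
  -- predicate conversion for the two filters
  have hfiltc : (Finset.univ.filter (fun i : Fin p => k ≤ (i : ℕ)))
      = Finset.univ.filter (fun i : Fin p => ¬ ((i : ℕ) < k)) := by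
    ext i; simp [not_lt]
  have hcardc : (Finset.univ.filter (fun i : Fin p => ¬ ((i : ℕ) < k))).card = p - k := by
    have h1 := Finset.card_filter_add_card_filter_not
      (s := (Finset.univ : Finset (Fin p))) (p := fun i : Fin p => (i : ℕ) < k)
    rw [card_filt p k hkp.le, Finset.card_univ, Fintype.card_fin] at h1
    omega
  have hlogdet : Real.log Sig.det
      = (∑ i ∈ Finset.univ.filter (fun i : Fin p => (i : ℕ) < k), Real.log (lamv i))
        + ((p : ℝ) - k) * Real.log lam := by
    rw [hdet, Real.log_prod (fun i _ => (hlamv_pos i).ne')]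
    rw [← Finset.sum_filter_add_sum_filter_not Finset.univ (fun i : Fin p => (i : ℕ) < k)]
    congr 1
    have : ∀ i ∈ Finset.univ.filter (fun i : Fin p => ¬ ((i : ℕ) < k)),
        Real.log (lamv i) = Real.log lam := by
      intro i hi
      rw [Finset.mem_filter] at hi
      rw [hlam_tail i (by omega)]
    rw [Finset.sum_congr rfl this, Finset.sum_const, hcardc, nsmul_eq_mul,
      Nat.cast_sub hkp.le]
  -- inverse of Sig
  have hdinv : Matrix.diagonal lamv * Matrix.diagonal (fun i => (lamv i)⁻¹)
      = (1 : Matrix (Fin p) (Fin p) ℝ) := by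
    rw [Matrix.diagonal_mul_diagonal]
    have : (fun i => lamv i * (lamv i)⁻¹) = fun _ : Fin p => (1:ℝ) :=
      funext fun i => mul_inv_cancel₀ (hlamv_pos i).ne'
    rw [this, Matrix.diagonal_one]
  have hSiginv : Sig⁻¹ = Γ * Matrix.diagonal (fun i => (lamv i)⁻¹) * Γᵀ := by
    apply Matrix.inv_eq_right_inv
    rw [hSig]
    calc Γ * Matrix.diagonal lamv * Γᵀ * (Γ * Matrix.diagonal (fun i => (lamv i)⁻¹) * Γᵀ)
        = Γ * Matrix.diagonal lamv * ((Γᵀ * Γ) * (Matrix.diagonal (fun i => (lamv i)⁻¹) * Γᵀ)) := by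
          simp only [Matrix.mul_assoc]
      _ = Γ * (Matrix.diagonal lamv * Matrix.diagonal (fun i => (lamv i)⁻¹)) * Γᵀ := by
          rw [hΓ', Matrix.one_mul, Matrix.mul_assoc, Matrix.mul_assoc, Matrix.mul_assoc]
      _ = 1 := by rw [hdinv, Matrix.mul_one, hΓ]
  -- trace computation
  have hPt : Pᵀ = Cᵀ * Γ := by rw [hP, Matrix.transpose_mul, Matrix.transpose_transpose]
  have htr : Matrix.trace (Sig⁻¹ * S)
      = ∑ i, (lamv i)⁻¹ * ∑ j, P i j ^ 2 * d j := by
    have e1 : Sig⁻¹ * S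
        = Γ * (Matrix.diagonal (fun i => (lamv i)⁻¹) * P * Matrix.diagonal d * Pᵀ) * Γᵀ := by
      rw [hSiginv, hS, hP]
      simp only [Matrix.transpose_mul, Matrix.transpose_transpose, Matrix.mul_assoc, hΓ,
        Matrix.mul_one]
    rw [e1, Matrix.trace_mul_comm (Γ * (Matrix.diagonal (fun i => (lamv i)⁻¹) * P *
      Matrix.diagonal d * Pᵀ)) Γᵀ, ← Matrix.mul_assoc, hΓ', Matrix.one_mul]
    rw [Matrix.trace]
    apply Finset.sum_congr rfl
    intro i _
    have e2 : ∀ M : Matrix (Fin p) (Fin p) ℝ,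
        (Matrix.diagonal (fun i => (lamv i)⁻¹) * M).diag i = (lamv i)⁻¹ * M.diag i := by
      intro M; simp [Matrix.diag, Matrix.diagonal_mul]
    rw [Matrix.mul_assoc, Matrix.mul_assoc, e2]
    congr 1
    rw [← Matrix.mul_assoc, Matrix.diag_apply, Matrix.mul_apply]
    apply Finset.sum_congr rfl
    intro j _
    rw [Matrix.mul_diagonal, Matrix.transpose_apply]
    ring
  -- notation
  set K : Finset (Fin p) := Finset.univ.filter (fun i : Fin p => (i : ℕ) < k) with hK
  set F : Fin p → ℝ := fun i => ∑ j, P i j ^ 2 * d j with hF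
  set t : ℝ := ∑ i, (lamv i)⁻¹ * F i with ht
  set s1 : ℝ := ∑ i ∈ K, (lamv i)⁻¹ * d i with hs1d
  set s2 : ℝ := ∑ i ∈ Finset.univ.filter (fun i : Fin p => k ≤ (i : ℕ)), lam⁻¹ * d i with hs2d
  have hs1 : ∑ i ∈ K, d i / lamv i = s1 :=
    Finset.sum_congr rfl (fun i _ => by rw [div_eq_mul_inv, mul_comm])
  have hs2 : ∑ i ∈ Finset.univ.filter (fun i : Fin p => k ≤ (i : ℕ)), d i / lam = s2 :=
    Finset.sum_congr rfl (fun i _ => by rw [div_eq_mul_inv, mul_comm])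
  have hAB : A = B - (n / 2) * (t - (s1 + s2)) := by
    rw [hA, hB, hlogdet, htr, hs1, hs2]
    ring
  -- total sums
  have hFtot : ∑ i, F i = ∑ j, d j := by
    rw [hF]
    rw [Finset.sum_comm]
    apply Finset.sum_congr rfl
    intro j _
    rw [← Finset.sum_mul, hcol, one_mul]
  -- the key identity
  have hexp : ∀ S' : Finset (Fin p), ∑ i ∈ S', (lam⁻¹ - (lamv i)⁻¹) * (d i - F i)
      = lam⁻¹ * (∑ i ∈ S', d i) - lam⁻¹ * (∑ i ∈ S', F i)
        - (∑ i ∈ S', (lamv i)⁻¹ * d i) + (∑ i ∈ S', (lamv i)⁻¹ * F i) := by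
    intro S'
    rw [Finset.mul_sum, Finset.mul_sum, ← Finset.sum_sub_distrib, ← Finset.sum_sub_distrib,
      ← Finset.sum_add_distrib]
    apply Finset.sum_congr rfl
    intro i _
    ring
  have hsplitt : t = (∑ i ∈ K, (lamv i)⁻¹ * F i)
      + lam⁻¹ * ((∑ j, d j) - ∑ i ∈ K, F i) := by
    rw [ht, ← Finset.sum_filter_add_sum_filter_not Finset.univ (fun i : Fin p => (i : ℕ) < k),
      ← hK]
    congr 1
    have h1 : ∀ i ∈ Finset.univ.filter (fun i : Fin p => ¬ ((i : ℕ) < k)),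
        (lamv i)⁻¹ * F i = lam⁻¹ * F i := by
      intro i hi
      rw [Finset.mem_filter] at hi
      rw [hlam_tail i (by omega)]
    rw [Finset.sum_congr rfl h1, ← Finset.mul_sum]
    congr 1
    have h2 := Finset.sum_filter_add_sum_filter_not Finset.univ
      (fun i : Fin p => (i : ℕ) < k) F
    rw [← hFtot]
    rw [← hK] at h2
    linarith
  have hsplits2 : s2 = lam⁻¹ * ((∑ j, d j) - ∑ i ∈ K, d i) := by
    rw [hs2d, hfiltc, ← Finset.mul_sum]
    congr 1
    have h2 := Finset.sum_filter_add_sum_filter_not Finset.univ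
      (fun i : Fin p => (i : ℕ) < k) d
    rw [← hK] at h2
    linarith
  have hkey : t - (s1 + s2) = ∑ i ∈ K, (lam⁻¹ - (lamv i)⁻¹) * (d i - F i) := by
    rw [hexp K, hsplitt, hsplits2, hs1d]
    ring
  -- extend the sum over all indices
  have hEuniv : ∑ i ∈ K, (lam⁻¹ - (lamv i)⁻¹) * (d i - F i)
      = ∑ i : Fin p, (lam⁻¹ - (lamv i)⁻¹) * (d i - F i) := by
    rw [← Finset.sum_filter_add_sum_filter_not Finset.univ (fun i : Fin p => (i : ℕ) < k),
      ← hK]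
    have : ∑ i ∈ Finset.univ.filter (fun i : Fin p => ¬ ((i : ℕ) < k)),
        (lam⁻¹ - (lamv i)⁻¹) * (d i - F i) = 0 := by
      apply Finset.sum_eq_zero
      intro i hi
      rw [Finset.mem_filter] at hi
      rw [hlam_tail i (by omega)]
      ring
    rw [this, add_zero]
  -- ℕ-indexed versions for Abel summation
  set a : ℕ → ℝ := fun m => if h : m < p then lam⁻¹ - (lamv ⟨m, h⟩)⁻¹ else 0 with ha
  set g : ℕ → ℝ := fun m => if h : m < p then d ⟨m, h⟩ - F ⟨m, h⟩ else 0 with hg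
  have hanti : ∀ i j, i ≤ j → j ≤ p → a j ≤ a i := by
    intro i j hij hjp
    rcases lt_or_ge j p with hj | hj
    · have hi : i < p := lt_of_le_of_lt hij hj
      rw [ha]
      simp only [dif_pos hj, dif_pos hi]
      have hle : lamv ⟨j, hj⟩ ≤ lamv ⟨i, hi⟩ := hlam_anti _ _ (by simp [Fin.le_def]; omega)
      have := inv_anti₀ (hlamv_pos ⟨j, hj⟩) hle
      linarith
    · have hjp' : j = p := le_antisymm hjp hj
      rw [ha]
      simp only [hjp', dif_neg (lt_irrefl p)]
      rcases lt_or_ge i p with hi | hi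
      · simp only [dif_pos hi]
        have := inv_anti₀ hlam_pos (hlamv_ge ⟨i, hi⟩)
        linarith
      · simp only [dif_neg (not_lt.mpr hi)]
        exact le_rfl
  -- majorization: partial sums are nonnegative
  have hmaj : ∀ m, m ≤ p →
      0 ≤ ∑ i ∈ Finset.univ.filter (fun i : Fin p => (i : ℕ) < m), (d i - F i) := by
    intro m hm
    rcases Nat.eq_zero_or_pos m with rfl | hm1
    · simp
    have hm' : m - 1 < p := by omega
    set c : ℝ := d ⟨m - 1, hm'⟩ with hc
    set w : Fin p → ℝ := fun j => ∑ i ∈ Finset.univ.filter (fun i : Fin p => (i : ℕ) < m),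
      P i j ^ 2 with hw
    have hw0 : ∀ j, 0 ≤ w j := fun j => Finset.sum_nonneg (fun i _ => sq_nonneg _)
    have hw1 : ∀ j, w j ≤ 1 := by
      intro j
      rw [hw, ← hcol j]
      exact Finset.sum_le_sum_of_subset_of_nonneg (Finset.filter_subset _ _)
        (fun i _ _ => sq_nonneg _)
    have hwsum : ∑ j, w j = (m : ℝ) := by
      rw [hw, Finset.sum_comm]
      rw [Finset.sum_congr rfl (fun i (_ : i ∈ Finset.univ.filter
        (fun i : Fin p => (i : ℕ) < m)) => hrow i)]
      rw [Finset.sum_const, card_filt p m hm, nsmul_eq_mul, mul_one]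
    have hFs : ∑ i ∈ Finset.univ.filter (fun i : Fin p => (i : ℕ) < m), F i
        = ∑ j, w j * d j := by
      rw [hF, Finset.sum_comm]
      apply Finset.sum_congr rfl
      intro j _
      rw [hw, Finset.sum_mul]
    have key1 : ∀ j : Fin p, (j : ℕ) < m → c ≤ d j := by
      intro j hj
      exact hd_anti j ⟨m - 1, hm'⟩ (by simp [Fin.le_def]; omega)
    have key2 : ∀ j : Fin p, ¬ ((j : ℕ) < m) → d j ≤ c := by
      intro j hj
      exact hd_anti ⟨m - 1, hm'⟩ j (by simp [Fin.le_def]; omega)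
    have e2 : ∑ j, w j * (d j - c)
        ≤ ∑ j ∈ Finset.univ.filter (fun j : Fin p => (j : ℕ) < m), (d j - c) := by
      rw [← Finset.sum_filter_add_sum_filter_not Finset.univ (fun j : Fin p => (j : ℕ) < m)
        (fun j => w j * (d j - c))]
      have t1 : ∑ j ∈ Finset.univ.filter (fun j : Fin p => (j : ℕ) < m), w j * (d j - c)
          ≤ ∑ j ∈ Finset.univ.filter (fun j : Fin p => (j : ℕ) < m), (d j - c) := by
        apply Finset.sum_le_sum
        intro j hj
        rw [Finset.mem_filter] at hj
        have := mul_le_mul_of_nonneg_right (hw1 j) (sub_nonneg.mpr (key1 j hj.2))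
        linarith
      have t2 : ∑ j ∈ Finset.univ.filter (fun j : Fin p => ¬ ((j : ℕ) < m)),
          w j * (d j - c) ≤ 0 := by
        apply Finset.sum_nonpos
        intro j hj
        rw [Finset.mem_filter] at hj
        exact mul_nonpos_of_nonneg_of_nonpos (hw0 j) (sub_nonpos.mpr (key2 j hj.2))
      linarith
    have e1 : ∑ j, w j * d j = (∑ j, w j * (d j - c)) + c * m := by
      have : ∀ j : Fin p, w j * d j = w j * (d j - c) + c * w j := fun j => by ring
      rw [Finset.sum_congr rfl (fun j _ => this j), Finset.sum_add_distrib, ← Finset.mul_sum,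
        hwsum]
    have e3 : ∑ j ∈ Finset.univ.filter (fun j : Fin p => (j : ℕ) < m), (d j - c)
        = (∑ j ∈ Finset.univ.filter (fun j : Fin p => (j : ℕ) < m), d j) - c * m := by
      rw [Finset.sum_sub_distrib, Finset.sum_const, card_filt p m hm, nsmul_eq_mul]
      ring
    rw [Finset.sum_sub_distrib, hFs]
    linarith
  have hGr : ∀ m, m ≤ p → 0 ≤ ∑ i ∈ Finset.range m, g i := by
    intro m hm
    have h0 := hmaj m hm
    rw [filt_to_range p m hm (fun i => d i - F i)] at h0
    rw [hg]
    exact h0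
  -- Abel summation gives nonnegativity
  have hQ0 : 0 ≤ t - (s1 + s2) := by
    have habel := abel_aux a g p hanti hGr
    have hap : a p = 0 := by rw [ha]; simp
    rw [hap, zero_mul] at habel
    have hconv : ∑ i : Fin p, (lam⁻¹ - (lamv i)⁻¹) * (d i - F i)
        = ∑ i ∈ Finset.range p, a i * g i := by
      rw [← Fin.sum_univ_eq_sum_range (fun m => a m * g m) p]
      apply Finset.sum_congr rfl
      intro i _
      rw [ha, hg]
      simp [i.isLt]
    rw [hkey, hEuniv, hconv]
    exact habel
  -- the penalty sum
  set T : ℝ := ∑ i ∈ K, ∑ j ∈ Finset.univ.filter (fun j : Fin p => i < j),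
      (d i - d j) * (P i j) ^ 2 / lamv i with hT
  have hterm : ∀ i : Fin p, ∀ j : Fin p, i < j →
      0 ≤ (d i - d j) * (P i j) ^ 2 / lamv i := by
    intro i j hij
    apply div_nonneg _ (hlamv_pos i).le
    exact mul_nonneg (sub_nonneg.mpr (hd_strict i j hij).le) (sq_nonneg _)
  have hT0 : 0 ≤ T := by
    rw [hT]
    apply Finset.sum_nonneg
    intro i _
    apply Finset.sum_nonneg
    intro j hj
    rw [Finset.mem_filter] at hj
    exact hterm i j hj.2
  by_cases hTz : T = 0
  · -- all relevant entries of P vanish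
    have hPz : ∀ i ∈ K, ∀ j : Fin p, i < j → P i j = 0 := by
      intro i hi j hij
      have h1 : ∑ i ∈ K, (∑ j ∈ Finset.univ.filter (fun j : Fin p => i < j),
          (d i - d j) * (P i j) ^ 2 / lamv i) = 0 := by rw [← hT]; exact hTz
      have h2 := (Finset.sum_eq_zero_iff_of_nonneg (fun i _ =>
        Finset.sum_nonneg (fun j hj => hterm i j (Finset.mem_filter.mp hj).2))).mp h1 i hi
      have h3 := (Finset.sum_eq_zero_iff_of_nonneg (fun j hj =>
        hterm i j (Finset.mem_filter.mp hj).2)).mp h2 j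
        (Finset.mem_filter.mpr ⟨Finset.mem_univ j, hij⟩)
      have hne : d i - d j ≠ 0 := sub_ne_zero.mpr (hd_strict i j hij).ne'
      rw [div_eq_zero_iff] at h3
      rcases h3 with h3 | h3
      · rcases mul_eq_zero.mp h3 with h4 | h4
        · exact absurd h4 hne
        · exact pow_eq_zero_iff two_ne_zero |>.mp h4
      · exact absurd h3 (hlamv_pos i).ne'
    have hFd : ∀ i ∈ K, 0 ≤ F i - d i := by
      intro i hi
      have hFi : F i - d i = ∑ j, P i j ^ 2 * (d j - d i) := by
        have e : ∑ j, P i j ^ 2 * (d j - d i)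
            = (∑ j, P i j ^ 2 * d j) - (∑ j, P i j ^ 2) * d i := by
          rw [Finset.sum_mul, ← Finset.sum_sub_distrib]
          apply Finset.sum_congr rfl
          intro j _
          ring
        rw [e, hrow i, one_mul, hF]
      rw [hFi]
      apply Finset.sum_nonneg
      intro j _
      by_cases hij : i < j
      · rw [hPz i hi j hij]
        simp
      · exact mul_nonneg (sq_nonneg _) (sub_nonneg.mpr (hd_anti j i (not_lt.mp hij)))
    have hle : t - (s1 + s2) ≤ 0 := by
      rw [hkey]
      apply Finset.sum_nonpos
      intro i hi
      have h1 : 0 ≤ lam⁻¹ - (lamv i)⁻¹ := sub_nonneg.mpr (inv_anti₀ hlam_pos (hlamv_ge i))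
      have h2 : d i - F i ≤ 0 := by linarith [hFd i hi]
      exact mul_nonpos_of_nonneg_of_nonpos h1 h2
    refine ⟨0, le_rfl, ?_⟩
    have hts : t - (s1 + s2) = 0 := le_antisymm hle hQ0
    rw [hAB, hts]
    ring
  · have hTpos : 0 < T := lt_of_le_of_ne hT0 (Ne.symm hTz)
    refine ⟨(t - (s1 + s2)) / T, div_nonneg hQ0 hT0, ?_⟩
    have : 1 / 2 * ((t - (s1 + s2)) / T) * n * T = n / 2 * (t - (s1 + s2)) := by
      field_simp
    rw [this]
    exact hAB
end

section
/- Let Σ be a p×p real symmetric positive definite matrix with eigenvalues λ₁ ≥ … ≥ λ_p > 0 (in decreasing order) and let S be a p×p real symmetric positive semidefinite matrix with eigenvalues d₁ ≥ … ≥ d_p (in decreasing order). Then tr(Σ⁻¹S) ≥ Σ_{i=1}^p d_i/λ_i. Equivalently, with A = −(n/2)·log det Σ − (n/2)·tr(Σ⁻¹S) and B = −(n/2)·Σ_{i=1}^p log λ_i − (n/2)·Σ_{i=1}^p d_i/λ_i for any n > 0, one has A ≤ B. -/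
open Matrix Finset

lemma permMatrix_row_sum {m : Type*} [Fintype m] [DecidableEq m]
    (σ : Equiv.Perm m) (f g : m → ℝ) (i : m) :
    ∑ j, f i * (σ.permMatrix ℝ) i j * g j = f i * g (σ i) := by
  rw [Finset.sum_eq_single (σ i)]
  · simp [Equiv.Perm.permMatrix, PEquiv.toMatrix_apply, Equiv.toPEquiv_apply]
  · intro b _ hb
    simp [Equiv.Perm.permMatrix, PEquiv.toMatrix_apply, Equiv.toPEquiv_apply, Ne.symm hb]
  · simp

lemma key_ds {m : Type*} [Fintype m] [DecidableEq m] (W : Matrix m m ℝ)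
    (hW : W ∈ doublyStochastic ℝ m) (f g : m → ℝ) (hfg : Antivary f g) :
    ∑ i, f i * g i ≤ ∑ i, ∑ j, f i * W i j * g j := by
  obtain ⟨w, hw0, hw1, hwW⟩ := exists_eq_sum_perm_of_mem_doublyStochastic hW
  have hW' : ∀ i j, W i j = ∑ σ : Equiv.Perm m, w σ * (σ.permMatrix ℝ) i j := by
    intro i j; rw [← hwW]
    simp [Matrix.sum_apply, Equiv.Perm.permMatrix, PEquiv.toMatrix_apply,
      Equiv.toPEquiv_apply, mul_ite, mul_one, mul_zero]
  have hRHS : (∑ i, ∑ j, f i * W i j * g j)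
      = ∑ σ : Equiv.Perm m, w σ * ∑ i, f i * g (σ i) := by
    have h1 : ∀ i j, f i * W i j * g j
        = ∑ σ : Equiv.Perm m, w σ * (f i * (σ.permMatrix ℝ) i j * g j) := by
      intro i j
      rw [hW' i j, Finset.mul_sum, Finset.sum_mul]
      exact Finset.sum_congr rfl fun σ _ => by ring
    simp only [h1]
    have hsw : ∀ i : m, (∑ j, ∑ σ : Equiv.Perm m, w σ * (f i * (σ.permMatrix ℝ) i j * g j))
        = ∑ σ : Equiv.Perm m, ∑ j, w σ * (f i * (σ.permMatrix ℝ) i j * g j) :=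
      fun i => Finset.sum_comm
    simp only [hsw]
    rw [Finset.sum_comm]
    refine Finset.sum_congr rfl fun σ _ => ?_
    rw [Finset.mul_sum]
    refine Finset.sum_congr rfl fun i _ => ?_
    rw [← Finset.mul_sum, permMatrix_row_sum]
  rw [hRHS]
  calc ∑ i, f i * g i = ∑ σ : Equiv.Perm m, w σ * ∑ i, f i * g i := by
        rw [← Finset.sum_mul, hw1, one_mul]
    _ ≤ ∑ σ : Equiv.Perm m, w σ * ∑ i, f i * g (σ i) := by
        refine Finset.sum_le_sum fun σ _ => mul_le_mul_of_nonneg_left ?_ (hw0 σ)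
        simpa [smul_eq_mul] using hfg.sum_smul_le_sum_smul_comp_perm (σ := σ)

/-- If `Σ` is symmetric positive definite with decreasing
eigenvalues `λ₁ ≥ … ≥ λ_p > 0` and `S` is symmetric positive semidefinite with
decreasing eigenvalues `d₁ ≥ … ≥ d_p`, then `tr(Σ⁻¹S) ≥ Σ_i d_i/λ_i`;
equivalently, for every `n > 0`,
`A = −(n/2) log det Σ − (n/2) tr(Σ⁻¹S)` satisfies
`A ≤ B = −(n/2) Σ_i log λ_i − (n/2) Σ_i d_i/λ_i`. -/
theorem trace_inv_mul_ge (p : ℕ) (hp : 1 ≤ p)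
    (Γ C : Matrix (Fin p) (Fin p) ℝ)
    (lamv d : Fin p → ℝ)
    (hΓ : Γ * Γᵀ = 1) (hΓ' : Γᵀ * Γ = 1)
    (hC : C * Cᵀ = 1) (hC' : Cᵀ * C = 1)
    (hlam_anti : ∀ i j : Fin p, i ≤ j → lamv j ≤ lamv i)
    (hlam_pos : ∀ i : Fin p, 0 < lamv i)
    (hd_anti : ∀ i j : Fin p, i ≤ j → d j ≤ d i)
    (hd_nonneg : ∀ i : Fin p, 0 ≤ d i)
    (Sig S : Matrix (Fin p) (Fin p) ℝ)
    (hSig : Sig = Γ * Matrix.diagonal lamv * Γᵀ)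
    (hS : S = C * Matrix.diagonal d * Cᵀ) :
    (∑ i : Fin p, d i / lamv i) ≤ Matrix.trace (Sig⁻¹ * S) ∧
      ∀ n : ℝ, 0 < n →
        -(n / 2) * Real.log Sig.det - (n / 2) * Matrix.trace (Sig⁻¹ * S)
          ≤ -(n / 2) * (∑ i : Fin p, Real.log (lamv i))
              - (n / 2) * ∑ i : Fin p, d i / lamv i := by
  set D' : Matrix (Fin p) (Fin p) ℝ := Matrix.diagonal (fun i => (lamv i)⁻¹) with hD'
  have hdd : Matrix.diagonal lamv * D' = 1 := by
    rw [hD', Matrix.diagonal_mul_diagonal]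
    ext i j
    rcases eq_or_ne i j with rfl | h
    · simp [Matrix.one_apply_eq, mul_inv_cancel₀ (hlam_pos i).ne']
    · simp [Matrix.diagonal_apply_ne _ h, Matrix.one_apply_ne h]
  have hSinv : Sig⁻¹ = Γ * D' * Γᵀ := by
    apply Matrix.inv_eq_right_inv
    rw [hSig]
    calc Γ * Matrix.diagonal lamv * Γᵀ * (Γ * D' * Γᵀ)
        = Γ * (Matrix.diagonal lamv * ((Γᵀ * Γ) * (D' * Γᵀ))) := by
          simp only [Matrix.mul_assoc]
      _ = 1 := by
          rw [hΓ', Matrix.one_mul,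
            ← Matrix.mul_assoc (Matrix.diagonal lamv) D' Γᵀ, hdd, Matrix.one_mul, hΓ]
  set U : Matrix (Fin p) (Fin p) ℝ := Γᵀ * C with hU
  have hUt : Uᵀ = Cᵀ * Γ := by rw [hU, Matrix.transpose_mul, Matrix.transpose_transpose]
  have hUU : U * Uᵀ = 1 := by
    rw [hU, hUt, Matrix.mul_assoc, ← Matrix.mul_assoc C, hC, Matrix.one_mul, hΓ']
  have hUU' : Uᵀ * U = 1 := by
    rw [hU, hUt, Matrix.mul_assoc, ← Matrix.mul_assoc Γ, hΓ, Matrix.one_mul, hC']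
  set W : Matrix (Fin p) (Fin p) ℝ := fun i j => U i j * U i j with hW
  have hWds : W ∈ doublyStochastic ℝ (Fin p) := by
    rw [mem_doublyStochastic_iff_sum]
    refine ⟨fun i j => mul_self_nonneg _, fun i => ?_, fun j => ?_⟩
    · have : ∑ j, W i j = (U * Uᵀ) i i := by
        simp [hW, Matrix.mul_apply, Matrix.transpose_apply]
      rw [this, hUU]; simp [Matrix.one_apply]
    · have : ∑ i, W i j = (Uᵀ * U) j j := by
        simp [hW, Matrix.mul_apply, Matrix.transpose_apply, mul_comm]
      rw [this, hUU']; simp [Matrix.one_apply]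
  have htr : Matrix.trace (Sig⁻¹ * S) = ∑ i, ∑ j, (lamv i)⁻¹ * W i j * d j := by
    have h1 : Sig⁻¹ * S = Γ * (D' * (U * Matrix.diagonal d * Uᵀ)) * Γᵀ := by
      rw [hSinv, hS, hU, hUt]
      simp only [Matrix.mul_assoc]
      rw [hΓ, Matrix.mul_one]
    rw [h1, Matrix.trace_mul_cycle]
    rw [← Matrix.mul_assoc, hΓ', Matrix.one_mul]
    have h2 : ∀ i, (D' * (U * Matrix.diagonal d * Uᵀ)) i i
        = ∑ j, (lamv i)⁻¹ * W i j * d j := by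
      intro i
      rw [hD', Matrix.diagonal_mul]
      rw [show (U * Matrix.diagonal d * Uᵀ) i i = ∑ j, (U i j * d j) * U i j by
        rw [Matrix.mul_apply]
        exact Finset.sum_congr rfl fun x _ => by
          rw [Matrix.mul_diagonal, Matrix.transpose_apply]]
      rw [Finset.mul_sum]
      exact Finset.sum_congr rfl fun j _ => by rw [hW]; ring
    simp [Matrix.trace, Matrix.diag, h2]
  have hanti : Antivary (fun i => (lamv i)⁻¹) d := by
    intro i j hij
    have hji : j ≤ i := by
      by_contra h
      exact absurd (hd_anti i j (le_of_not_ge h)) (not_le.2 hij)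
    exact inv_anti₀ (hlam_pos i) (hlam_anti j i hji)
  have hmain : (∑ i : Fin p, d i / lamv i) ≤ Matrix.trace (Sig⁻¹ * S) := by
    rw [htr]
    calc (∑ i : Fin p, d i / lamv i) = ∑ i, (lamv i)⁻¹ * d i := by
          exact Finset.sum_congr rfl fun i _ => by rw [div_eq_mul_inv, mul_comm]
      _ ≤ ∑ i, ∑ j, (lamv i)⁻¹ * W i j * d j := key_ds W hWds _ _ hanti
  refine ⟨hmain, fun n hn => ?_⟩
  have hlogdet : Real.log Sig.det = ∑ i : Fin p, Real.log (lamv i) := by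
    have hdet : Sig.det = ∏ i, lamv i := by
      have h1 : Γ.det * Γ.det = 1 := by
        have := congrArg Matrix.det hΓ
        rwa [Matrix.det_mul, Matrix.det_transpose, Matrix.det_one] at this
      rw [hSig, Matrix.det_mul, Matrix.det_mul, Matrix.det_transpose,
        Matrix.det_diagonal]
      linear_combination (∏ i, lamv i) * h1
    rw [hdet, Real.log_prod (fun i _ => (hlam_pos i).ne')]
  rw [hlogdet]
  have h2 : (n / 2) * (∑ i : Fin p, d i / lamv i) ≤ (n / 2) * Matrix.trace (Sig⁻¹ * S) :=
    mul_le_mul_of_nonneg_left hmain (by linarith)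
  linarith
end

section
/- For every c ≥ 0.12, 1.1·φ(c) < 1; that is, 1.1·(1/2 + √(1/c) − log(1+√c)/c) < 1 for all c ≥ 0.12. -/
open Real Set

/-- Numeric bound: `exp (3270521/11000000) < 1.34641`. -/
lemma exp_q_lt : Real.exp (3270521/11000000 : ℝ) < 1.34641 := by
  have h := Real.exp_bound' (x := (3270521/11000000 : ℝ)) (by norm_num) (by norm_num)
    (n := 6) (by norm_num)
  refine lt_of_le_of_lt h ?_
  rw [show (6:ℕ) = 5+1 by rfl]
  rw [Finset.sum_range_succ, Finset.sum_range_succ, Finset.sum_range_succ,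
    Finset.sum_range_succ, Finset.sum_range_succ, Finset.sum_range_succ]
  norm_num [Nat.factorial]

/-- Lower bound on `sqrt 0.12`. -/
lemma sqrt_012_gt : (0.34641 : ℝ) < Real.sqrt 0.12 := by
  have : (0.34641 : ℝ) = Real.sqrt (0.34641 ^ 2) := (Real.sqrt_sq (by norm_num)).symm
  rw [this]
  exact Real.sqrt_lt_sqrt (by positivity) (by norm_num)

/-- Upper bound on `sqrt 0.12`. -/
lemma sqrt_012_lt : Real.sqrt 0.12 < (0.346411 : ℝ) := by
  have : (0.346411 : ℝ) = Real.sqrt (0.346411 ^ 2) := (Real.sqrt_sq (by norm_num)).symm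
  rw [this]
  exact Real.sqrt_lt_sqrt (by norm_num) (by norm_num)

/-- The auxiliary function `g u = log(1+u) - u + (9/22) u²`. -/
noncomputable def gAux : ℝ → ℝ := fun u => Real.log (1 + u) - u + (9/22) * u ^ 2

lemma gAux_hasDerivAt {u : ℝ} (hu : 0 < u) :
    HasDerivAt gAux (1 / (1 + u) - 1 + (9/11) * u) u := by
  have h1 : HasDerivAt (fun x : ℝ => 1 + x) 1 u := (hasDerivAt_id u).const_add 1
  have h2 : HasDerivAt (fun x : ℝ => Real.log (1 + x)) (1 / (1 + u)) u := by
    simpa [one_div] using h1.log (by linarith)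
  have h3 : HasDerivAt (fun x : ℝ => (9/22) * x ^ 2) ((9/22) * (2 * u)) u := by
    simpa using ((hasDerivAt_pow 2 u).const_mul (9/22 : ℝ))
  have := (h2.sub (hasDerivAt_id u)).add h3
  exact this.congr_deriv (by ring)

lemma gAux_strictMono : StrictMonoOn gAux (Ici (Real.sqrt 0.12)) := by
  have h0 : (0.34641 : ℝ) < Real.sqrt 0.12 := sqrt_012_gt
  apply strictMonoOn_of_deriv_pos (convex_Ici _)
  · apply ContinuousOn.add
    · apply ContinuousOn.sub
      · apply Real.continuousOn_log.comp (by fun_prop)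
        intro x hx
        simp only [Set.mem_Ici] at hx
        simp only [Set.mem_compl_iff, Set.mem_singleton_iff]
        nlinarith
      · fun_prop
    · fun_prop
  · intro x hx
    rw [interior_Ici] at hx
    simp only [Set.mem_Ioi] at hx
    have hx0 : (0.34641 : ℝ) < x := lt_trans h0 hx
    rw [(gAux_hasDerivAt (by linarith)).deriv]
    have h1 : (0:ℝ) < 1 + x := by linarith
    rw [div_sub' (ne_of_gt h1), div_add' _ _ _ (ne_of_gt h1)]
    apply div_pos _ h1
    nlinarith

lemma gAux_pos_at_sqrt : 0 < gAux (Real.sqrt 0.12) := by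
  have h1 : (0.34641 : ℝ) < Real.sqrt 0.12 := sqrt_012_gt
  have h2 : Real.sqrt 0.12 < (0.346411 : ℝ) := sqrt_012_lt
  have hsq : Real.sqrt 0.12 ^ 2 = 0.12 := Real.sq_sqrt (by norm_num)
  have key : Real.exp (Real.sqrt 0.12 - 27/550) < 1 + Real.sqrt 0.12 := by
    calc Real.exp (Real.sqrt 0.12 - 27/550)
        < Real.exp (3270521/11000000 : ℝ) := by
          apply Real.exp_lt_exp.2; linarith
      _ < 1.34641 := exp_q_lt
      _ < 1 + Real.sqrt 0.12 := by linarith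
  have hlog : Real.sqrt 0.12 - 27/550 < Real.log (1 + Real.sqrt 0.12) :=
    (Real.lt_log_iff_exp_lt (by linarith)).2 key
  unfold gAux
  rw [hsq]
  norm_num at hlog ⊢
  linarith

lemma key_ineq {u : ℝ} (hu : Real.sqrt 0.12 ≤ u) :
    u - (9/22) * u ^ 2 < Real.log (1 + u) := by
  have h : 0 < gAux u := by
    rcases eq_or_lt_of_le hu with h | h
    · rw [← h]; exact gAux_pos_at_sqrt
    · calc (0:ℝ) < gAux (Real.sqrt 0.12) := gAux_pos_at_sqrt
        _ < gAux u := gAux_strictMono (Set.self_mem_Ici) (Set.mem_Ici.2 hu) h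
  unfold gAux at h
  linarith

/-- For every `c ≥ 0.12`,
`1.1·φ(c) = 1.1·(1/2 + √(1/c) − log(1+√c)/c) < 1`. -/
theorem phi_scaled_lt_one (c : ℝ) (hc : (0.12 : ℝ) ≤ c) :
    1.1 * (1 / 2 + Real.sqrt (1 / c) - Real.log (1 + Real.sqrt c) / c) < 1 := by
  have hc0 : (0:ℝ) < c := lt_of_lt_of_le (by norm_num) hc
  set t := Real.sqrt c with ht_def
  have ht0 : 0 < t := Real.sqrt_pos.2 hc0
  have htt : t ^ 2 = c := Real.sq_sqrt hc0.le
  have hts : Real.sqrt (1 / c) = 1 / t := by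
    rw [one_div, Real.sqrt_inv, one_div]
  have ht : Real.sqrt 0.12 ≤ t := Real.sqrt_le_sqrt hc
  have hkey : t - (9/22) * t ^ 2 < Real.log (1 + t) := key_ineq ht
  rw [hts, ← htt]
  rw [show (1:ℝ)/2 + 1/t - Real.log (1 + t) / t ^ 2
      = (t ^ 2 / 2 + t - Real.log (1 + t)) / t ^ 2 by field_simp]
  rw [← mul_div_assoc, div_lt_one (by positivity)]
  nlinarith
end
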